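/- Let A be a nonempty finite set, y : A → ℝ, x ∈ ℝ, 0 < γ < 1, and let D(x,y) = { z : A → ℝ | (∀a, z(a) ≥ 0) ∧ Σ_a z(a)·y(a) ≤ x/γ ∧ Σ_a z(a) = 1 } be nonempty. Then every extreme point of D(x,y) is of the form λ·δ_a + (1-λ)·δ_{a'} for some a, a' ∈ A and λ ∈ [0,1], where δ_a denotes the indicator function of {a}. -/

import Mathlib

lemma perturb_aux6 {A : Type*} [Fintype A] [DecidableEq A]
    (y : A → ℝ) (c : ℝ) (z : A → ℝ)
    (hz : z ∈ Set.extremePoints ℝ {w : A → ℝ |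
      (∀ a, 0 ≤ w a) ∧ (∑ a, w a * y a) ≤ c ∧ (∑ a, w a) = 1})
    (a1 a2 a3 : A) (h12 : a1 ≠ a2) (h13 : a1 ≠ a3) (h23 : a2 ≠ a3)
    (h1 : 0 < z a1) (h2 : 0 < z a2) (h3 : 0 < z a3)
    (c1 c2 c3 : ℝ) (hc1 : c1 ≠ 0)
    (hcs : c1 + c2 + c3 = 0)
    (hcy : c1 * y a1 + c2 * y a2 + c3 * y a3 = 0) : False := by
  obtain ⟨⟨hnn, hiq, hs1⟩, hext⟩ := hz
  set d : A → ℝ := fun b =>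
    (if b = a1 then c1 else 0) + (if b = a2 then c2 else 0) +
      (if b = a3 then c3 else 0) with hd
  have hd1 : d a1 = c1 := by simp [hd, h12, h13]
  have hdsum : ∑ b, d b = 0 := by
    simp [hd, Finset.sum_add_distrib, Finset.sum_ite_eq', hcs]
  have hdy : ∑ b, d b * y b = 0 := by
    simp only [hd, add_mul, ite_mul, zero_mul, Finset.sum_add_distrib,
      Finset.sum_ite_eq', Finset.mem_univ, if_true]
    linarith
  set K : ℝ := |c1| + |c2| + |c3| + 1 with hK
  have hKpos : 0 < K := by positivity
  set m : ℝ := min (z a1) (min (z a2) (z a3)) with hm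
  have hmpos : 0 < m := lt_min h1 (lt_min h2 h3)
  set ε : ℝ := m / K with hε
  have hεpos : 0 < ε := div_pos hmpos hKpos
  have hεK : ε * K = m := div_mul_cancel₀ _ (ne_of_gt hKpos)
  have habs : ∀ c' : ℝ, |c'| ≤ K → ∀ a : A, m ≤ z a → |ε * c'| ≤ z a := by
    intro c' hc' a ha
    calc |ε * c'| = ε * |c'| := by rw [abs_mul, abs_of_pos hεpos]
      _ ≤ ε * K := mul_le_mul_of_nonneg_left hc' hεpos.le
      _ = m := hεK
      _ ≤ z a := ha
  have hεd : ∀ b, |ε * d b| ≤ z b := by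
    intro b
    by_cases hb1 : b = a1
    · subst hb1
      rw [hd1]
      exact habs c1 (by simp [hK]; linarith [abs_nonneg c2, abs_nonneg c3]) _
        (min_le_left _ _)
    by_cases hb2 : b = a2
    · rw [hb2]
      have : d a2 = c2 := by simp [hd, Ne.symm h12, h23]
      rw [this]
      exact habs c2 (by simp [hK]; linarith [abs_nonneg c1, abs_nonneg c3]) _
        ((min_le_right _ _).trans (min_le_left _ _))
    by_cases hb3 : b = a3
    · rw [hb3]
      have : d a3 = c3 := by simp [hd, Ne.symm h13, Ne.symm h23]
      rw [this]
      exact habs c3 (by simp [hK]; linarith [abs_nonneg c1, abs_nonneg c2]) _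
        ((min_le_right _ _).trans (min_le_right _ _))
    · have : d b = 0 := by simp [hd, hb1, hb2, hb3]
      rw [this, mul_zero, abs_zero]
      exact hnn b
  have hx1 : (fun b => z b - ε * d b) ∈ {w : A → ℝ |
      (∀ a, 0 ≤ w a) ∧ (∑ a, w a * y a) ≤ c ∧ (∑ a, w a) = 1} := by
    refine ⟨fun b => by have h1' := hεd b; have h2' := le_abs_self (ε * d b); simp only []; linarith, ?_, ?_⟩
    · have h : ∑ b, (z b - ε * d b) * y b
          = (∑ b, z b * y b) - ε * ∑ b, d b * y b := by
        rw [Finset.mul_sum, ← Finset.sum_sub_distrib]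
        exact Finset.sum_congr rfl fun b _ => by ring
      rw [h, hdy]; simpa using hiq
    · have h : ∑ b, (z b - ε * d b)
          = (∑ b, z b) - ε * ∑ b, d b := by
        rw [Finset.mul_sum, ← Finset.sum_sub_distrib]
      rw [h, hdsum, hs1]; ring
  have hx2 : (fun b => z b + ε * d b) ∈ {w : A → ℝ |
      (∀ a, 0 ≤ w a) ∧ (∑ a, w a * y a) ≤ c ∧ (∑ a, w a) = 1} := by
    refine ⟨fun b => by have h1' := hεd b; have h2' := neg_abs_le (ε * d b); simp only []; linarith, ?_, ?_⟩
    · have h : ∑ b, (z b + ε * d b) * y b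
          = (∑ b, z b * y b) + ε * ∑ b, d b * y b := by
        rw [Finset.mul_sum, ← Finset.sum_add_distrib]
        exact Finset.sum_congr rfl fun b _ => by ring
      rw [h, hdy]; simpa using hiq
    · have h : ∑ b, (z b + ε * d b)
          = (∑ b, z b) + ε * ∑ b, d b := by
        rw [Finset.mul_sum, ← Finset.sum_add_distrib]
      rw [h, hdsum, hs1]; ring
  have hseg : z ∈ openSegment ℝ (fun b => z b - ε * d b) (fun b => z b + ε * d b) := by
    refine ⟨1/2, 1/2, by norm_num, by norm_num, by norm_num, ?_⟩
    funext b
    simp only [Pi.add_apply, Pi.smul_apply, smul_eq_mul]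
    ring
  have := (hext hx1 hx2 hseg)
  have h' := congrFun this a1
  simp only [hd1] at h'
  have : ε * c1 = 0 := by linarith
  rcases mul_eq_zero.1 this with h | h
  · exact absurd h (ne_of_gt hεpos)
  · exact hc1 h

theorem stmt_6 {A : Type*} [Fintype A] [Nonempty A] [DecidableEq A]
    (y : A → ℝ) (x γ : ℝ) (hγ0 : 0 < γ) (hγ1 : γ < 1)
    (D : Set (A → ℝ))
    (hD : D = {z : A → ℝ |
      (∀ a, 0 ≤ z a) ∧ (∑ a, z a * y a) ≤ x / γ ∧ (∑ a, z a) = 1})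
    (hne : D.Nonempty) :
    ∀ z ∈ Set.extremePoints ℝ D, ∃ (a a' : A) (l : ℝ), l ∈ Set.Icc (0 : ℝ) 1 ∧
      z = fun b => l * (if b = a then (1 : ℝ) else 0) +
        (1 - l) * (if b = a' then (1 : ℝ) else 0) := by
  subst hD
  intro z hz
  obtain ⟨hnn, hiq, hs1⟩ := hz.1
  set S : Finset A := Finset.univ.filter (fun a => z a ≠ 0) with hS
  have hzS : ∀ b, b ∉ S → z b = 0 := by
    intro b hb
    by_contra h
    exact hb (Finset.mem_filter.2 ⟨Finset.mem_univ _, h⟩)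
  have hSz : ∀ b ∈ S, 0 < z b := by
    intro b hb
    exact lt_of_le_of_ne (hnn b) (Ne.symm (Finset.mem_filter.1 hb).2)
  have hcard : S.card ≤ 2 := by
    by_contra h
    push_neg at h
    obtain ⟨a1, a2, a3, h1, h2, h3, h12, h13, h23⟩ := Finset.two_lt_card_iff.1 h
    by_cases hy : y a1 = y a2
    · exact perturb_aux6 y (x / γ) z hz a1 a2 a3 h12 h13 h23
        (hSz a1 h1) (hSz a2 h2) (hSz a3 h3) 1 (-1) 0 one_ne_zero (by ring)
        (by rw [hy]; ring)
    · exact perturb_aux6 y (x / γ) z hz a3 a1 a2 (Ne.symm h13) (Ne.symm h23) h12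
        (hSz a3 h3) (hSz a1 h1) (hSz a2 h2)
        (y a1 - y a2) (y a2 - y a3) (y a3 - y a1) (sub_ne_zero.2 hy) (by ring)
        (by ring)
  have hsum_S : ∑ b ∈ S, z b = 1 := by
    rw [← hs1]
    exact Finset.sum_subset (Finset.subset_univ S) (fun b _ hb => hzS b hb)
  obtain h0 | h1 | h2 : S.card = 0 ∨ S.card = 1 ∨ S.card = 2 := by omega
  · exfalso
    rw [Finset.card_eq_zero.1 h0, Finset.sum_empty] at hsum_S
    norm_num at hsum_S
  · obtain ⟨a, ha⟩ := Finset.card_eq_one.1 h1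
    rw [ha, Finset.sum_singleton] at hsum_S
    refine ⟨a, a, 1, ⟨zero_le_one, le_refl 1⟩, funext fun b => ?_⟩
    by_cases hb : b = a
    · subst hb; simp [hsum_S]
    · have : z b = 0 := hzS b (by rw [ha]; simp [hb])
      simp [this, hb]
  · obtain ⟨a, a', hab, ha⟩ := Finset.card_eq_two.1 h2
    rw [ha, Finset.sum_pair hab] at hsum_S
    have haS : a ∈ S := by rw [ha]; simp
    have ha'S : a' ∈ S := by rw [ha]; simp
    refine ⟨a, a', z a, ⟨hnn a, by linarith [hnn a']⟩, funext fun b => ?_⟩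
    by_cases hb : b = a
    · subst hb; simp [hab]
    · by_cases hb' : b = a'
      · subst hb'; simp [hb]; linarith
      · have : z b = 0 := hzS b (by rw [ha]; simp [hb, hb'])
        simp [this, hb, hb']
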